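/- Let Λ = ℤ[t,t⁻¹], let M be a Λ-module, N a submodule of M, I a nonempty set, m_i ∈ M (i ∈ I) elements with m_i − m_j ∈ N for all i, j ∈ I, and for each i ∈ I let X_i be a submodule of N with (1−t)·X_i = 0. Then the set Q(N,(m_i),(X_i)), the disjoint union of the quotients Q_i = N/X_i over i ∈ I, equipped with the operation x ▷ y = m_j − m_i + t·x + (1−t)·y + X_i for x ∈ Q_i and y ∈ Q_j, is a medial quandle. -/

import Mathlib

open LaurentPolynomial

set_option synthInstance.maxHeartbeats 1000000
set_option maxHeartbeats 1000000

noncomputable section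

/-- The ring `Λ = ℤ[t,t⁻¹]` of Laurent polynomials with integer coefficients. -/
abbrev Λ : Type := LaurentPolynomial ℤ

/-- The variable `t ∈ Λ`. -/
abbrev tL : Λ := T 1

/-- A medial quandle structure on a type `Q`: an idempotent binary operation whose right
translations are bijections, satisfying the medial law. -/
structure MedialQuandleStr (Q : Type*) where
  op : Q → Q → Q
  idem : ∀ x, op x x = x
  bij : ∀ y, Function.Bijective fun x => op x y
  medial : ∀ w x y z, op (op w x) (op y z) = op (op w y) (op x z)

/-- A quandle structure on a type `T`. -/
structure QuandleStr (T : Type*) where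
  op : T → T → T
  idem : ∀ x, op x x = x
  bij : ∀ y, Function.Bijective fun x => op x y
  distrib : ∀ x y z, op (op x y) z = op (op x z) (op y z)

namespace MedialQuandleStr

variable {Q : Type*} (s : MedialQuandleStr Q)

/-- The translation `β_y : x ↦ x ▷ y`, as a permutation of `Q`. -/
def β (y : Q) : Equiv.Perm Q := Equiv.ofBijective _ (s.bij y)

/-- `β(Q)`: the subgroup of permutations generated by the translations. -/
def transGroup : Subgroup (Equiv.Perm Q) := Subgroup.closure (Set.range s.β)

/-- The displacement group `Dis(Q)`, generated by the elementary displacements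
`β_y β_z⁻¹`. -/
def Dis : Subgroup (Equiv.Perm Q) :=
  Subgroup.closure {d : Equiv.Perm Q | ∃ y z, d = s.β y * (s.β z)⁻¹}

/-- The orbit of `q`: the smallest subset of `Q` containing `q` and closed under the
action of `β(Q)`. -/
def orbit (q : Q) : Set Q := {x | ∃ g ∈ s.transGroup, g q = x}

end MedialQuandleStr

section Construction

variable {M : Type*} [AddCommGroup M] [Module Λ M] {I : Type*}

/-- The carrier of the quandle `Q(N,(m_i),(X_i))`: the disjoint union of the quotients
`Q_i = N/X_i`. -/
def QCar (N : Submodule Λ M) (X : I → Submodule Λ ↥N) : Type _ :=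
  Σ i : I, ↥N ⧸ X i

/-- The condition `(1-t)·X_i = 0` for all `i`. -/
def annCond (N : Submodule Λ M) (X : I → Submodule Λ ↥N) : Prop :=
  ∀ i, ∀ x ∈ X i, (1 - tL) • (x : ↥N) = 0

/-- Multiplication by `1-t`, descended from `N/X_j` to `N` (well defined since
`(1-t)·X_j = 0`). -/
def oneSubT (N : Submodule Λ M) {X : I → Submodule Λ ↥N} (h : annCond N X) (j : I) :
    (↥N ⧸ X j) →ₗ[Λ] ↥N :=
  Submodule.liftQ (X j) ((1 - tL) • (LinearMap.id : ↥N →ₗ[Λ] ↥N))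
    (fun x hx => by simpa using h j x hx)

/-- The operation of `Q(N,(m_i),(X_i))`: for `x ∈ Q_i` and `y ∈ Q_j`,
`x ▷ y = m_j - m_i + t·x + (1-t)·y + X_i ∈ Q_i`. -/
def qop (N : Submodule Λ M) (m : I → M) {X : I → Submodule Λ ↥N}
    (hm : ∀ i j, m i - m j ∈ N) (h : annCond N X) :
    QCar N X → QCar N X → QCar N X :=
  fun x y =>
    ⟨x.1, Submodule.Quotient.mk (⟨m y.1 - m x.1, hm y.1 x.1⟩ : ↥N)
        + tL • x.2 + Submodule.Quotient.mk (oneSubT N h y.1 y.2)⟩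

end Construction

section Aux

variable {M : Type*} [AddCommGroup M] [Module Λ M] {I : Type*}

lemma tL_mul_Tneg : tL * T (-1 : ℤ) = 1 := by
  rw [← T_add]; norm_num

lemma qop_mk (N : Submodule Λ M) (m : I → M) {X : I → Submodule Λ ↥N}
    (hm : ∀ i j, m i - m j ∈ N) (h : annCond N X) (i j : I) (a : ↥N) (b : ↥N) :
    qop N m hm h ⟨i, Submodule.Quotient.mk a⟩ ⟨j, Submodule.Quotient.mk b⟩ =
      ⟨i, Submodule.Quotient.mk
          ((⟨m j - m i, hm j i⟩ : ↥N) + tL • a + (1 - tL) • b)⟩ := by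
  simp [qop, oneSubT, Submodule.liftQ_apply, ← Submodule.Quotient.mk_smul,
    ← Submodule.Quotient.mk_add]
  rfl

end Aux

/-- The structure `Q(N,(m_i),(X_i))` of the construction is a medial
quandle: the operation `qop` is idempotent, its right translations are bijections, and it
satisfies the medial law. -/
theorem stmt0 {M : Type*} [AddCommGroup M] [Module Λ M] {I : Type*} [Nonempty I]
    (N : Submodule Λ M) (m : I → M) (X : I → Submodule Λ ↥N)
    (hm : ∀ i j, m i - m j ∈ N) (h : annCond N X) :
    (∀ x : QCar N X, qop N m hm h x x = x) ∧
    (∀ y : QCar N X, Function.Bijective fun x => qop N m hm h x y) ∧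
    (∀ w x y z : QCar N X,
      qop N m hm h (qop N m hm h w x) (qop N m hm h y z) =
        qop N m hm h (qop N m hm h w y) (qop N m hm h x z)) := by
  refine ⟨?_, ?_, ?_⟩
  · rintro ⟨i, a⟩
    obtain ⟨a, rfl⟩ := Submodule.Quotient.mk_surjective _ a
    rw [qop_mk]
    refine congrArg (Sigma.mk i) (congrArg _ ?_)
    ext
    push_cast
    simp only [sub_self]
    module
  · rintro ⟨j, b⟩
    obtain ⟨b, rfl⟩ := Submodule.Quotient.mk_surjective _ b
    set g : QCar N X → QCar N X := fun x =>
      ⟨x.1, (T (-1 : ℤ) : Λ) • (x.2 - Submodule.Quotient.mk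
        ((⟨m j - m x.1, hm j x.1⟩ : ↥N) + (1 - tL) • b))⟩ with hg
    have hleft : ∀ x, g (qop N m hm h x ⟨j, Submodule.Quotient.mk b⟩) = x := by
      rintro ⟨i, a⟩
      obtain ⟨a, rfl⟩ := Submodule.Quotient.mk_surjective _ a
      rw [qop_mk, hg]
      refine congrArg (Sigma.mk i) ?_
      rw [← Submodule.Quotient.mk_sub, ← Submodule.Quotient.mk_smul]
      refine congrArg _ ?_
      have : ((⟨m j - m i, hm j i⟩ : ↥N) + tL • a + (1 - tL) • b)
          - ((⟨m j - m i, hm j i⟩ : ↥N) + (1 - tL) • b) = tL • a := by abel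
      rw [this, smul_smul, mul_comm, tL_mul_Tneg, one_smul]
    have hright : ∀ x, qop N m hm h (g x) ⟨j, Submodule.Quotient.mk b⟩ = x := by
      rintro ⟨i, a⟩
      obtain ⟨a, rfl⟩ := Submodule.Quotient.mk_surjective _ a
      rw [hg]
      simp only
      rw [← Submodule.Quotient.mk_sub, ← Submodule.Quotient.mk_smul, qop_mk]
      refine congrArg (Sigma.mk i) (congrArg _ ?_)
      rw [smul_smul, tL_mul_Tneg, one_smul]
      abel
    exact ⟨Function.LeftInverse.injective hleft,
      Function.RightInverse.surjective hright⟩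
  · rintro ⟨i, a⟩ ⟨j, b⟩ ⟨k, c⟩ ⟨l, d⟩
    obtain ⟨a, rfl⟩ := Submodule.Quotient.mk_surjective _ a
    obtain ⟨b, rfl⟩ := Submodule.Quotient.mk_surjective _ b
    obtain ⟨c, rfl⟩ := Submodule.Quotient.mk_surjective _ c
    obtain ⟨d, rfl⟩ := Submodule.Quotient.mk_surjective _ d
    rw [qop_mk, qop_mk, qop_mk, qop_mk, qop_mk, qop_mk]
    refine congrArg (Sigma.mk i) (congrArg _ ?_)
    ext
    push_cast
    module
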